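/- For every strategy profile α and every user k, the potential function decomposes as φ α = w k * (Σ over n ≠ k of w n * [α n = α k]) * [α k > 0] + w k * V k * [α k = 0] + (1/2) * Σ over l ≠ k Σ over n with n ≠ l and n ≠ k of w l * w n * [α n = α l] * [α l > 0] + Σ over l ≠ k of w l * V l * [α l = 0]. -/

import Mathlib

/-- Decomposition of the potential function isolating user `k`. -/
theorem potential_decomposition (K M : ℕ) (p h : Fin K → ℝ)
    (hp : ∀ k, 0 < p k) (hh : ∀ k, 0 < h k)
    (w : Fin K → ℝ) (hw : ∀ k, w k = p k * h k)
    (V : Fin K → ℝ)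
    (φ : (Fin K → Fin (M + 1)) → ℝ)
    (hφ : ∀ α, φ α =
      (1 / 2) * ∑ k : Fin K, ∑ n ∈ Finset.univ.erase k,
          w k * w n * (if α n = α k then (1 : ℝ) else 0) * (if 0 < α k then (1 : ℝ) else 0)
      + ∑ k : Fin K, w k * V k * (if α k = 0 then (1 : ℝ) else 0))
    (α : Fin K → Fin (M + 1)) (k : Fin K) :
    φ α =
      w k * (∑ n ∈ Finset.univ.erase k, w n * (if α n = α k then (1 : ℝ) else 0))
          * (if 0 < α k then (1 : ℝ) else 0)
      + w k * V k * (if α k = 0 then (1 : ℝ) else 0)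
      + (1 / 2) * ∑ l ∈ Finset.univ.erase k, ∑ n ∈ (Finset.univ.erase l).erase k,
          w l * w n * (if α n = α l then (1 : ℝ) else 0) * (if 0 < α l then (1 : ℝ) else 0)
      + ∑ l ∈ Finset.univ.erase k, w l * V l * (if α l = 0 then (1 : ℝ) else 0) := by
  rw [hφ α]
  set f : Fin K → Fin K → ℝ := fun l n =>
    w l * w n * (if α n = α l then (1 : ℝ) else 0) * (if 0 < α l then (1 : ℝ) else 0)
    with hf
  have hsym : ∀ l n : Fin K, f l n = f n l := by
    intro l n
    simp only [hf]
    by_cases hln : α n = α l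
    · rw [hln]; ring
    · simp [hln, Ne.symm hln]
  have h1 : (∑ l : Fin K, ∑ n ∈ Finset.univ.erase l, f l n)
      = (∑ n ∈ Finset.univ.erase k, f k n)
        + ∑ l ∈ Finset.univ.erase k,
            (f l k + ∑ n ∈ (Finset.univ.erase l).erase k, f l n) := by
    rw [← Finset.add_sum_erase Finset.univ
      (fun l => ∑ n ∈ Finset.univ.erase l, f l n) (Finset.mem_univ k)]
    congr 1
    apply Finset.sum_congr rfl
    intro l hl
    have hlk : k ∈ Finset.univ.erase l :=
      Finset.mem_erase.2 ⟨Ne.symm (Finset.ne_of_mem_erase hl), Finset.mem_univ k⟩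
    rw [← Finset.add_sum_erase _ _ hlk]
  have h2 : (∑ l ∈ Finset.univ.erase k, f l k) = ∑ n ∈ Finset.univ.erase k, f k n :=
    Finset.sum_congr rfl fun l _ => hsym l k
  have h3 : (∑ l : Fin K, w l * V l * (if α l = 0 then (1 : ℝ) else 0))
      = w k * V k * (if α k = 0 then (1 : ℝ) else 0)
        + ∑ l ∈ Finset.univ.erase k, w l * V l * (if α l = 0 then (1 : ℝ) else 0) :=
    (Finset.add_sum_erase Finset.univ _ (Finset.mem_univ k)).symm
  have h4 : (∑ n ∈ Finset.univ.erase k, f k n)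
      = w k * (∑ n ∈ Finset.univ.erase k, w n * (if α n = α k then (1 : ℝ) else 0))
          * (if 0 < α k then (1 : ℝ) else 0) := by
    rw [Finset.mul_sum, Finset.sum_mul]
    apply Finset.sum_congr rfl
    intro n _
    simp only [hf]; ring
  rw [h1, Finset.sum_add_distrib, h2, h3, h4]
  ring
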